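/- Let A be a 2n×2n real positive definite matrix and let (u,v) be a normalised symplectic eigenvector pair of A, i.e. Au = dJv, Av = −dJu and ⟨u, Jv⟩ = 1 for some d > 0. Then ‖u‖² + ‖v‖² ≤ 2κ(A), where κ(A) = ‖A‖·‖A⁻¹‖ is the condition number of A with respect to the operator norm. -/

import Mathlib

open Filter Matrix Topology
open scoped Classical

/-- The space of `2n × 2n` real matrices, indexed by `Fin n ⊕ Fin n`. -/
abbrev Mat (n : ℕ) := Matrix (Fin n ⊕ Fin n) (Fin n ⊕ Fin n) ℝ

/-- `2n × 2m` real matrices. -/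
abbrev MatR (n m : ℕ) := Matrix (Fin n ⊕ Fin n) (Fin m ⊕ Fin m) ℝ

/-- The standard symplectic form matrix `J = [[0, I], [-I, 0]]`. -/
def symplJ (n : ℕ) : Mat n := Matrix.fromBlocks 0 1 (-1) 0

/-- The increasingly sorted symplectic eigenvalues of `A` (0-based indexing), defined via
Williamson's theorem: `d : Fin n → ℝ` is the unique monotone positive tuple such that
`MᵀAM = diag d ⊕ diag d` for some symplectic `M` (which exists whenever `A` is positive
definite). -/
noncomputable def symplEig {n : ℕ} (A : Mat n) : Fin n → ℝ :=
  if h : ∃ d : Fin n → ℝ, Monotone d ∧ (∀ i, 0 < d i) ∧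
      ∃ M : Mat n, Mᵀ * symplJ n * M = symplJ n ∧
        Mᵀ * A * M = Matrix.fromBlocks (Matrix.diagonal d) 0 0 (Matrix.diagonal d)
  then h.choose else fun _ => 0

/-- `sEig A j` is the `j`-th symplectic eigenvalue `d_j(A)`, with 1-based index `j`. -/
noncomputable def sEig {n : ℕ} (A : Mat n) (j : ℕ) : ℝ :=
  if h : j - 1 < n then symplEig A ⟨j - 1, h⟩ else 0

/-- `i_m`: the number of indices `k ≤ m` (1-based) with `d_k(A) = d_m(A)`. -/
noncomputable def iIdx {n : ℕ} (A : Mat n) (m : ℕ) : ℕ :=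
  ((Finset.Icc 1 n).filter fun k => k ≤ m ∧ sEig A k = sEig A m).card

/-- `j_m`: the number of indices `k > m` (1-based) with `d_k(A) = d_m(A)`. -/
noncomputable def jIdx {n : ℕ} (A : Mat n) (m : ℕ) : ℕ :=
  ((Finset.Icc 1 n).filter fun k => m < k ∧ sEig A k = sEig A m).card

/-- Membership in `Sp(2n, 2m)`: the columns form a symplectically orthonormal set,
equivalently `Sᵀ J_{2n} S = J_{2m}`. -/
def InSp (n m : ℕ) (S : MatR n m) : Prop := Sᵀ * symplJ n * S = symplJ m

/-- Membership in `Sp(2n, 2m, A)`: additionally the `j`-th column pair `(u_j, v_j)` is a pair of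
symplectic eigenvectors of `A` for the symplectic eigenvalue `d_j(A)`. -/
def InSpA (n m : ℕ) (A : Mat n) (S : MatR n m) : Prop :=
  InSp n m S ∧ ∀ j : Fin m,
    A *ᵥ (fun i => S i (Sum.inl j)) = sEig A (j + 1) • (symplJ n *ᵥ fun i => S i (Sum.inr j)) ∧
    A *ᵥ (fun i => S i (Sum.inr j)) = (-sEig A (j + 1)) • (symplJ n *ᵥ fun i => S i (Sum.inl j))

/-- The inner product `⟨X, Y⟩ = tr (X Y)` on matrices. -/
noncomputable def minner {α : Type*} [Fintype α] (X Y : Matrix α α ℝ) : ℝ := (X * Y).trace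

/-- `σ_m : S(2n) → (-∞, ∞]`, equal to `-2 (d_1(P) + ⋯ + d_m(P))` on positive definite `P`
and `∞` elsewhere. -/
noncomputable def sigmaE {n : ℕ} (m : ℕ) (P : Mat n) : EReal :=
  if P.PosDef then (((-2) * ∑ j ∈ Finset.Icc 1 m, sEig P j : ℝ) : EReal) else ⊤

/-- The real-valued version of `σ_m`, i.e. `-2 (d_1(P) + ⋯ + d_m(P))`. -/
noncomputable def sigmaR {n : ℕ} (m : ℕ) (P : Mat n) : ℝ :=
  (-2) * ∑ j ∈ Finset.Icc 1 m, sEig P j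

/-- The Fenchel subdifferential of `σ_m` at `A`, within the space `S(2n)` of symmetric
matrices. -/
noncomputable def sigmaSub {n : ℕ} (m : ℕ) (A : Mat n) : Set (Mat n) :=
  {X | X.IsSymm ∧ ∀ H : Mat n, H.IsSymm →
    ((minner X (H - A) : ℝ) : EReal) ≤ sigmaE m H - sigmaE m A}

/-- `λ_k↓(C)`: the `k`-th largest eigenvalue (1-based) of the Hermitian matrix `C`. -/
noncomputable def kthLargestEig {ι : Type*} [Fintype ι] [DecidableEq ι]
    (C : Matrix ι ι ℂ) (k : ℕ) : ℝ :=
  if h : C.IsHermitian then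
    ((Finset.univ.val.map h.eigenvalues).sort (· ≤ ·)).getD (Fintype.card ι - k) 0
  else 0

/-- The index set for `M̃`: indices whose symplectic eigenvalue equals `d_m(A)`. -/
abbrev tilIdx {n : ℕ} (A : Mat n) (m : ℕ) := {k : Fin n // symplEig A k = sEig A m}

/-- The index set for `M̄`: indices whose symplectic eigenvalue is `< d_m(A)`. -/
abbrev barIdx {n : ℕ} (A : Mat n) (m : ℕ) := {k : Fin n // symplEig A k < sEig A m}

/-- `M̃`: the submatrix of `M` consisting of the column pairs `(u_k, v_k)` with
`d_k(A) = d_m(A)`. -/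
noncomputable def Mtil {n : ℕ} (A : Mat n) (m : ℕ) (M : Mat n) :
    Matrix (Fin n ⊕ Fin n) (tilIdx A m ⊕ tilIdx A m) ℝ :=
  M.submatrix id (Sum.map Subtype.val Subtype.val)

/-- `M̄`: the submatrix of `M` consisting of the column pairs `(u_k, v_k)` with
`d_k(A) < d_m(A)`. -/
noncomputable def Mbar {n : ℕ} (A : Mat n) (m : ℕ) (M : Mat n) :
    Matrix (Fin n ⊕ Fin n) (barIdx A m ⊕ barIdx A m) ℝ :=
  M.submatrix id (Sum.map Subtype.val Subtype.val)

/-- `B̄ = -M̄ᵀ B M̄`. -/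
noncomputable def Bbar {n : ℕ} (A : Mat n) (m : ℕ) (M B : Mat n) :
    Matrix (barIdx A m ⊕ barIdx A m) (barIdx A m ⊕ barIdx A m) ℝ :=
  -((Mbar A m M)ᵀ * B * Mbar A m M)

/-- `B̃ = -M̃ᵀ B M̃`. -/
noncomputable def Btil {n : ℕ} (A : Mat n) (m : ℕ) (M B : Mat n) :
    Matrix (tilIdx A m ⊕ tilIdx A m) (tilIdx A m ⊕ tilIdx A m) ℝ :=
  -((Mtil A m M)ᵀ * B * Mtil A m M)

/-- `B̃̃ = B̃₁₁ + B̃₂₂ + i (B̃₁₂ - B̃₁₂ᵀ)`, a Hermitian matrix. -/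
noncomputable def Btiltil {n : ℕ} (A : Mat n) (m : ℕ) (M B : Mat n) :
    Matrix (tilIdx A m) (tilIdx A m) ℂ :=
  fun p q =>
    ((Btil A m M B (Sum.inl p) (Sum.inl q) + Btil A m M B (Sum.inr p) (Sum.inr q) : ℝ) : ℂ) +
      Complex.I *
        ((Btil A m M B (Sum.inl p) (Sum.inr q) - Btil A m M B (Sum.inl q) (Sum.inr p) : ℝ) : ℂ)

/-- The directional derivative `d_m′(A; B)` of the `m`-th symplectic eigenvalue (1-based `m`). -/
noncomputable def dDeriv {n : ℕ} (A B : Mat n) (m : ℕ) : ℝ :=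
  limUnder (𝓝[>] (0 : ℝ)) (fun t => (sEig (A + t • B) m - sEig A m) / t)

/-- `m̂`: the smallest 1-based index `j` with `d_j(A) = d_m(A)`. -/
noncomputable def mhat {n : ℕ} (A : Mat n) (m : ℕ) : ℕ :=
  sInf {j : ℕ | 1 ≤ j ∧ sEig A j = sEig A m}

/-- The Clarke directional derivative `f°(A; B)` of `f` at `A` in direction `B`, where the
base point varies in the space of symmetric matrices. -/
noncomputable def clarkeD {n : ℕ} (f : Mat n → ℝ) (A B : Mat n) : ℝ :=
  Filter.limsup (fun p : Mat n × ℝ => (f (p.1 + p.2 • B) - f p.1) / p.2)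
    ((𝓝[{X : Mat n | X.IsSymm}] A) ×ˢ (𝓝[>] (0 : ℝ)))

/-- The Clarke subdifferential `∂° f(A)`. -/
noncomputable def clarkeSub {n : ℕ} (f : Mat n → ℝ) (A : Mat n) : Set (Mat n) :=
  {X | X.IsSymm ∧ ∀ H : Mat n, H.IsSymm → minner X H ≤ clarkeD f A H}

/-- The Michel-Penot directional derivative `f◇(A; B)`. -/
noncomputable def mpD {n : ℕ} (f : Mat n → ℝ) (A B : Mat n) : ℝ :=
  ⨆ X : {X : Mat n // X.IsSymm},
    Filter.limsup (fun t : ℝ => (f (A + t • X.1 + t • B) - f (A + t • X.1)) / t) (𝓝[>] (0 : ℝ))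

/-- The Michel-Penot subdifferential `∂◇ f(A)`. -/
noncomputable def mpSub {n : ℕ} (f : Mat n → ℝ) (A : Mat n) : Set (Mat n) :=
  {X | X.IsSymm ∧ ∀ H : Mat n, H.IsSymm → minner X H ≤ mpD f A H}

/-- `S_m(A)`: the set of normalised symplectic eigenvector pairs of `A` corresponding to the
symplectic eigenvalue `d_m(A)`. -/
noncomputable def SmSet {n : ℕ} (A : Mat n) (m : ℕ) :
    Set ((Fin n ⊕ Fin n → ℝ) × (Fin n ⊕ Fin n → ℝ)) :=
  {p | A *ᵥ p.1 = sEig A m • (symplJ n *ᵥ p.2) ∧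
       A *ᵥ p.2 = (-sEig A m) • (symplJ n *ᵥ p.1) ∧
       p.1 ⬝ᵥ (symplJ n *ᵥ p.2) = 1}

/-- The set `{ -(1/2)(xxᵀ + yyᵀ) : (x,y) ∈ S_m(A) }`. -/
noncomputable def gradSet {n : ℕ} (A : Mat n) (m : ℕ) : Set (Mat n) :=
  {X | ∃ p ∈ SmSet A m,
    X = (-(1 / 2) : ℝ) • (Matrix.vecMulVec p.1 p.1 + Matrix.vecMulVec p.2 p.2)}

/-- A symplectic eigenvector pair of `A` corresponding to some symplectic eigenvalue `d`. -/
noncomputable def EigPair {n : ℕ} (A : Mat n) (u v : Fin n ⊕ Fin n → ℝ) : Prop :=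
  (u ≠ 0 ∨ v ≠ 0) ∧ ∃ d : ℝ, (∃ i : Fin n, symplEig A i = d) ∧
    A *ᵥ u = d • (symplJ n *ᵥ v) ∧ A *ᵥ v = (-d) • (symplJ n *ᵥ u)

/-- The helper extending a finite matrix to a function on `ℕ × ℕ` (by zero). -/
def padFun {r i : ℕ} (U : Matrix (Fin r) (Fin i) ℝ) : ℕ → ℕ → ℝ :=
  fun a b => if h : a < r ∧ b < i then U ⟨a, h.1⟩ ⟨b, h.2⟩ else 0

/-- The set `Δ_m(A)` of structured `2n × 2m` matrices. -/
noncomputable def DeltaSet {n : ℕ} (A : Mat n) (m : ℕ) : Set (MatR n m) :=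
  {H | ∃ (U V : Matrix (Fin (iIdx A m + jIdx A m)) (Fin (iIdx A m)) ℝ),
    ((U.map (Complex.ofReal)) + Complex.I • (V.map (Complex.ofReal)))ᴴ *
      ((U.map (Complex.ofReal)) + Complex.I • (V.map (Complex.ofReal))) = 1 ∧
    ∀ (k : Fin n) (c : Fin m),
      (H (Sum.inl k) (Sum.inl c) =
        if (k : ℕ) < m - iIdx A m ∧ (c : ℕ) < m - iIdx A m then
          (if (k : ℕ) = (c : ℕ) then 1 else 0)
        else if (m - iIdx A m ≤ (k : ℕ) ∧ (k : ℕ) < m + jIdx A m) ∧ m - iIdx A m ≤ (c : ℕ) then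
          padFun U ((k : ℕ) - (m - iIdx A m)) ((c : ℕ) - (m - iIdx A m))
        else 0) ∧
      (H (Sum.inl k) (Sum.inr c) =
        if (m - iIdx A m ≤ (k : ℕ) ∧ (k : ℕ) < m + jIdx A m) ∧ m - iIdx A m ≤ (c : ℕ) then
          padFun V ((k : ℕ) - (m - iIdx A m)) ((c : ℕ) - (m - iIdx A m))
        else 0) ∧
      (H (Sum.inr k) (Sum.inl c) =
        if (m - iIdx A m ≤ (k : ℕ) ∧ (k : ℕ) < m + jIdx A m) ∧ m - iIdx A m ≤ (c : ℕ) then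
          -padFun V ((k : ℕ) - (m - iIdx A m)) ((c : ℕ) - (m - iIdx A m))
        else 0) ∧
      (H (Sum.inr k) (Sum.inr c) =
        if (k : ℕ) < m - iIdx A m ∧ (c : ℕ) < m - iIdx A m then
          (if (k : ℕ) = (c : ℕ) then 1 else 0)
        else if (m - iIdx A m ≤ (k : ℕ) ∧ (k : ℕ) < m + jIdx A m) ∧ m - iIdx A m ≤ (c : ℕ) then
          padFun U ((k : ℕ) - (m - iIdx A m)) ((c : ℕ) - (m - iIdx A m))
        else 0)}

/-- The operator norm (with respect to the Euclidean norm) of a `2n × 2n` real matrix. -/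
noncomputable def opN {n : ℕ} (A : Mat n) : ℝ :=
  ‖Matrix.toEuclideanCLM (𝕜 := ℝ) A‖


section Stmt17Aux

noncomputable def opN' {m : Type*} [Fintype m] [DecidableEq m] (A : Matrix m m ℝ) : ℝ :=
  ‖Matrix.toEuclideanCLM (𝕜 := ℝ) A‖

lemma normsq_euc {m : Type*} [Fintype m] (x : m → ℝ) :
    ‖((WithLp.equiv 2 (m → ℝ)).symm x : EuclideanSpace ℝ m)‖ ^ 2 = ∑ i, x i ^ 2 := by
  rw [← real_inner_self_eq_norm_sq]
  simp only [PiLp.inner_apply, WithLp.equiv_symm_apply, RCLike.inner_apply, conj_trivial, sq]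

lemma clm_mulVec {m : Type*} [Fintype m] [DecidableEq m] (A : Matrix m m ℝ) (x : m → ℝ) :
    Matrix.toEuclideanCLM (𝕜 := ℝ) A ((WithLp.equiv 2 _).symm x) =
      (WithLp.equiv 2 _).symm (A *ᵥ x) := by
  simp [Matrix.toLin'_apply]

lemma opN'_sq {m : Type*} [Fintype m] [DecidableEq m] (A : Matrix m m ℝ) :
    opN' A * opN' A = opN' (Aᴴ * A) := by
  unfold opN'
  rw [_root_.map_mul, show Aᴴ = star A from rfl, map_star]
  exact (CStarRing.norm_star_mul_self (x := Matrix.toEuclideanCLM (𝕜 := ℝ) A)).symm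

lemma mulVec_normsq_le {m : Type*} [Fintype m] [DecidableEq m] (A : Matrix m m ℝ) (x : m → ℝ) :
    ∑ i, (A *ᵥ x) i ^ 2 ≤ opN' A ^ 2 * ∑ i, x i ^ 2 := by
  have h := (Matrix.toEuclideanCLM (𝕜 := ℝ) A).le_opNorm ((WithLp.equiv 2 (m → ℝ)).symm x)
  rw [clm_mulVec] at h
  have h2 : ‖((WithLp.equiv 2 (m → ℝ)).symm (A *ᵥ x) : EuclideanSpace ℝ m)‖ ^ 2 ≤
      (opN' A * ‖((WithLp.equiv 2 (m → ℝ)).symm x : EuclideanSpace ℝ m)‖) ^ 2 := by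
    apply pow_le_pow_left₀ (norm_nonneg _) h
  rw [normsq_euc, mul_pow, normsq_euc] at h2
  exact h2

open scoped MatrixOrder in
lemma quad_lower {m : Type*} [Fintype m] [DecidableEq m] {A : Matrix m m ℝ} (hA : A.PosDef)
    (x : m → ℝ) : ∑ i, x i ^ 2 ≤ opN' A⁻¹ * (x ⬝ᵥ A *ᵥ x) := by
  set S := CFC.sqrt A with hSdef
  have hSS : S * S = A := CFC.sqrt_mul_sqrt_self A hA.posSemidef.nonneg
  have hSH : Sᴴ = S := (CFC.sqrt_nonneg A).posSemidef.1
  have hST : Sᵀ = S := by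
    funext i j; have := congrFun (congrFun hSH i) j
    simpa [Matrix.conjTranspose_apply] using this
  have hdet : IsUnit S.det := by
    have h1 : S.det * S.det = A.det := by rw [← Matrix.det_mul, hSS]
    have h2 : (0:ℝ) < A.det := hA.det_pos
    refine isUnit_iff_ne_zero.2 fun h => ?_
    rw [h, mul_zero] at h1; linarith
  have hinv : S⁻¹ * S = 1 := Matrix.nonsing_inv_mul S hdet
  have hAinv : A⁻¹ = S⁻¹ * S⁻¹ := by rw [← hSS, Matrix.mul_inv_rev]
  have hSinvH : (S⁻¹)ᴴ = S⁻¹ := by rw [Matrix.conjTranspose_nonsing_inv, hSH]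
  have hop : opN' S⁻¹ * opN' S⁻¹ = opN' A⁻¹ := by
    rw [opN'_sq, hSinvH, ← hAinv]
  set x' : EuclideanSpace ℝ m := (WithLp.equiv 2 (m → ℝ)).symm x with hx'
  have hxeq : x' = Matrix.toEuclideanCLM (𝕜 := ℝ) S⁻¹
      (Matrix.toEuclideanCLM (𝕜 := ℝ) S x') := by
    rw [← ContinuousLinearMap.mul_apply, ← _root_.map_mul, hinv, _root_.map_one,
      ContinuousLinearMap.one_apply]
  have hle : ‖x'‖ ≤ opN' S⁻¹ * ‖Matrix.toEuclideanCLM (𝕜 := ℝ) S x'‖ := by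
    conv_lhs => rw [hxeq]
    exact (Matrix.toEuclideanCLM (𝕜 := ℝ) S⁻¹).le_opNorm _
  have hsq : ‖x'‖ ^ 2 ≤ opN' A⁻¹ * ‖Matrix.toEuclideanCLM (𝕜 := ℝ) S x'‖ ^ 2 := by
    have := pow_le_pow_left₀ (norm_nonneg x') hle 2
    rw [mul_pow] at this
    calc ‖x'‖ ^ 2 ≤ opN' S⁻¹ ^ 2 * ‖Matrix.toEuclideanCLM (𝕜 := ℝ) S x'‖ ^ 2 := this
      _ = opN' A⁻¹ * ‖Matrix.toEuclideanCLM (𝕜 := ℝ) S x'‖ ^ 2 := by rw [sq, hop]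
  have hSx : ‖Matrix.toEuclideanCLM (𝕜 := ℝ) S x'‖ ^ 2 = x ⬝ᵥ A *ᵥ x := by
    rw [hx', clm_mulVec, normsq_euc]
    have : ∑ i, (S *ᵥ x) i ^ 2 = (S *ᵥ x) ⬝ᵥ (S *ᵥ x) := by
      simp [dotProduct, sq]
    rw [this, Matrix.dotProduct_mulVec, Matrix.vecMul_mulVec, hST, hSS,
      ← Matrix.dotProduct_mulVec]
  rw [hSx] at hsq
  rw [hx', normsq_euc] at hsq
  exact hsq

lemma J_rep (n : ℕ) (x : Fin n ⊕ Fin n → ℝ) :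
    symplJ n *ᵥ x = Sum.elim (fun i => x (Sum.inr i)) (fun i => -(x (Sum.inl i))) := by
  conv_lhs => rw [show x = Sum.elim (x ∘ Sum.inl) (x ∘ Sum.inr) from (Sum.elim_comp_inl_inr x).symm]
  rw [symplJ, Matrix.fromBlocks_mulVec]
  simp [Matrix.one_mulVec, Matrix.zero_mulVec, Matrix.neg_mulVec]
  rfl

lemma J_normsq (n : ℕ) (x : Fin n ⊕ Fin n → ℝ) :
    ∑ i, (symplJ n *ᵥ x) i ^ 2 = ∑ i, x i ^ 2 := by
  rw [J_rep, Fintype.sum_sum_type, Fintype.sum_sum_type]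
  simp [add_comm]

lemma J_T (n : ℕ) : (symplJ n)ᵀ = -symplJ n := by
  rw [symplJ, Matrix.fromBlocks_transpose]
  rw [show -Matrix.fromBlocks (0 : Matrix (Fin n) (Fin n) ℝ) 1 (-1) 0 =
    Matrix.fromBlocks (-0) (-1) (-(-1)) (-0) from (Matrix.fromBlocks_neg _ _ _ _)]
  simp

lemma J_anti (n : ℕ) (u v : Fin n ⊕ Fin n → ℝ) :
    v ⬝ᵥ (symplJ n *ᵥ u) = -(u ⬝ᵥ (symplJ n *ᵥ v)) := by
  rw [Matrix.dotProduct_mulVec, ← Matrix.transpose_transpose (symplJ n),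
    Matrix.vecMul_transpose, Matrix.transpose_transpose, J_T, Matrix.neg_mulVec,
    neg_dotProduct, dotProduct_comm]

end Stmt17Aux

theorem stmt17 {n : ℕ} (A : Mat n) (hA : A.PosDef) (u v : Fin n ⊕ Fin n → ℝ)
    (d : ℝ) (hd : 0 < d)
    (h1 : A *ᵥ u = d • (symplJ n *ᵥ v)) (h2 : A *ᵥ v = (-d) • (symplJ n *ᵥ u))
    (h3 : u ⬝ᵥ (symplJ n *ᵥ v) = 1) :
    (∑ i, (u i) ^ 2) + (∑ i, (v i) ^ 2) ≤ 2 * (opN A * opN A⁻¹) := by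
  have hopeq : ∀ B : Mat n, opN B = opN' B := fun _ => rfl
  -- u is nonzero
  have hune : u ≠ 0 := by
    intro h; rw [h] at h3; simp [zero_dotProduct] at h3
  obtain ⟨i0, hi0⟩ : ∃ i, u i ≠ 0 := by
    by_contra h; push_neg at h; exact hune (funext h)
  have hNu_pos : (0:ℝ) < ∑ i, u i ^ 2 := by
    have h1' : u i0 ^ 2 ≤ ∑ i, u i ^ 2 :=
      Finset.single_le_sum (fun j _ => sq_nonneg (u j)) (Finset.mem_univ i0)
    have : 0 < u i0 ^ 2 := by positivity
    linarith
  have hNv_nonneg : (0:ℝ) ≤ ∑ i, v i ^ 2 := Finset.sum_nonneg fun j _ => sq_nonneg (v j)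
  -- quadratic form values
  have hd_u : u ⬝ᵥ A *ᵥ u = d := by
    rw [h1, dotProduct_smul, h3]; simp
  have hd_v : v ⬝ᵥ A *ᵥ v = d := by
    rw [h2, dotProduct_smul, J_anti, h3]; simp
  -- lower bounds from quad_lower
  have hqu : ∑ i, u i ^ 2 ≤ opN' A⁻¹ * d := by
    have := quad_lower hA u; rwa [hd_u] at this
  have hqv : ∑ i, v i ^ 2 ≤ opN' A⁻¹ * d := by
    have := quad_lower hA v; rwa [hd_v] at this
  -- d ≤ opN A
  have hAu : ∑ i, (A *ᵥ u) i ^ 2 = d ^ 2 * ∑ i, v i ^ 2 := by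
    rw [h1]
    simp only [Pi.smul_apply, smul_eq_mul, mul_pow]
    rw [← Finset.mul_sum, J_normsq]
  have hAv : ∑ i, (A *ᵥ v) i ^ 2 = d ^ 2 * ∑ i, u i ^ 2 := by
    rw [h2]
    simp only [Pi.smul_apply, smul_eq_mul, mul_pow]
    rw [← Finset.mul_sum, J_normsq]
    ring
  have b1 := mulVec_normsq_le A u
  have b2 := mulVec_normsq_le A v
  rw [hAu] at b1
  rw [hAv] at b2
  have hopA_nonneg : (0:ℝ) ≤ opN' A := norm_nonneg _
  have hopAi_nonneg : (0:ℝ) ≤ opN' A⁻¹ := norm_nonneg _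
  have hsumpos : (0:ℝ) < (∑ i, u i ^ 2) + ∑ i, v i ^ 2 := by linarith
  have hd2 : d ^ 2 ≤ opN' A ^ 2 := by
    have hsum : d ^ 2 * ((∑ i, u i ^ 2) + ∑ i, v i ^ 2) ≤
        opN' A ^ 2 * ((∑ i, u i ^ 2) + ∑ i, v i ^ 2) := by ring_nf; nlinarith
    exact le_of_mul_le_mul_right (by linarith [hsum]) hsumpos
  have hdle : d ≤ opN' A := by nlinarith
  rw [hopeq A, hopeq A⁻¹]
  nlinarith
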